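/- Lemma (Hessian of the p-norm away from the coordinate hyperplanes, the key computation in the uniqueness proofs for the lower-level ALSO-X). Let p ∈ (1,∞), n ≥ 1, and let x ∈ ℝⁿ have all coordinates nonzero. Then the map y ↦ ‖y‖_p is twice continuously differentiable in a neighborhood of x, and its Hessian at x equals H(x) = (p−1)·( Σ_{j∈[n]} |x_j|^p )^{1/p − 2} · [ ( Σ_{j∈[n]} |x_j|^p ) · diag(|x_1|^{p−2}, …, |x_n|^{p−2}) − v·vᵀ ], where v_i = sign(x_i)·|x_i|^{p−1}. Moreover H(x) is positive semidefinite, and for y ∈ ℝⁿ one has yᵀH(x)y = 0 if and only if y is a scalar multiple of x (so H(x) has rank n−1 when n ≥ 2). -/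

import Mathlib

open Real

lemma sign_sq {t : ℝ} (ht : t ≠ 0) : Real.sign t * Real.sign t = 1 := by
  rcases ht.lt_or_gt with h | h
  · rw [Real.sign_of_neg h]; norm_num
  · rw [Real.sign_of_pos h]; norm_num

lemma sign_mul_abs' (r : ℝ) : Real.sign r * |r| = r := by
  rcases lt_trichotomy r 0 with h | h | h
  · rw [Real.sign_of_neg h, abs_of_neg h]; ring
  · simp [h]
  · rw [Real.sign_of_pos h, abs_of_pos h]; ring

lemma hasDerivAt_sign_abs {t : ℝ} (ht : t ≠ 0) :
    HasDerivAt (fun u : ℝ => |u|) (Real.sign t) t := by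
  rcases ht.lt_or_gt with h | h
  · simpa [Real.sign_of_neg h] using hasDerivAt_abs_neg h
  · simpa [Real.sign_of_pos h] using hasDerivAt_abs_pos h

lemma hasDerivAt_abs_rpow' {q : ℝ} {t : ℝ} (ht : t ≠ 0) :
    HasDerivAt (fun u : ℝ => |u| ^ q) (q * (Real.sign t * |t| ^ (q - 1))) t := by
  have h1 : HasDerivAt (fun s : ℝ => s ^ q) (q * |t| ^ (q - 1)) |t| :=
    Real.hasDerivAt_rpow_const (Or.inl (abs_ne_zero.2 ht))
  simpa [Function.comp_def, mul_assoc, mul_comm, mul_left_comm] using h1.comp t (hasDerivAt_sign_abs ht)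

lemma eventually_sign_eq {t : ℝ} (ht : t ≠ 0) :
    ∀ᶠ u in nhds t, Real.sign u = Real.sign t := by
  rcases ht.lt_or_gt with h | h
  · filter_upwards [eventually_lt_nhds h] with u hu
    rw [Real.sign_of_neg hu, Real.sign_of_neg h]
  · filter_upwards [eventually_gt_nhds h] with u hu
    rw [Real.sign_of_pos hu, Real.sign_of_pos h]

lemma hasDerivAt_sign_mul_rpow {q : ℝ} {t : ℝ} (ht : t ≠ 0) :
    HasDerivAt (fun u : ℝ => Real.sign u * |u| ^ q) (q * |t| ^ (q - 1)) t := by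
  have h1 : HasDerivAt (fun u : ℝ => Real.sign t * |u| ^ q)
      (Real.sign t * (q * (Real.sign t * |t| ^ (q - 1)))) t :=
    (hasDerivAt_abs_rpow' ht).const_mul _
  have h2 : Real.sign t * (q * (Real.sign t * |t| ^ (q - 1))) = q * |t| ^ (q - 1) := by
    have h := sign_sq ht
    calc Real.sign t * (q * (Real.sign t * |t| ^ (q - 1)))
        = (Real.sign t * Real.sign t) * (q * |t| ^ (q - 1)) := by ring
      _ = q * |t| ^ (q - 1) := by rw [h, one_mul]
  rw [h2] at h1
  apply h1.congr_of_eventuallyEq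
  filter_upwards [eventually_sign_eq ht] with u hu using by rw [hu]

lemma lagrange_identity {n : ℕ} (a b : Fin n → ℝ) :
    (∑ i, a i ^ 2) * (∑ i, b i ^ 2) - (∑ i, a i * b i) ^ 2
      = (∑ i, ∑ j, (a i * b j - a j * b i) ^ 2) / 2 := by
  have h1 : (∑ i, a i ^ 2) * (∑ i, b i ^ 2) = ∑ i, ∑ j, a i ^ 2 * b j ^ 2 :=
    Finset.sum_mul_sum _ _ _ _
  have h1' : (∑ i, a i ^ 2) * (∑ i, b i ^ 2) = ∑ i, ∑ j, a j ^ 2 * b i ^ 2 := by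
    rw [h1]; exact Finset.sum_comm
  have h2 : (∑ i, a i * b i) ^ 2 = ∑ i, ∑ j, (a i * b i) * (a j * b j) := by
    rw [sq]; exact Finset.sum_mul_sum _ _ _ _
  have h3 : ∀ i j : Fin n, (a i * b j - a j * b i) ^ 2
      = a i ^ 2 * b j ^ 2 + a j ^ 2 * b i ^ 2 - 2 * ((a i * b i) * (a j * b j)) := by
    intro i j; ring
  simp_rw [h3]
  rw [eq_div_iff (two_ne_zero)]
  simp_rw [Finset.sum_sub_distrib, Finset.sum_add_distrib, ← Finset.mul_sum]
  simp_rw [← Finset.sum_mul]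
  rw [← Finset.mul_sum, ← sq]
  ring

/-- **Hessian of the `p`-norm away from the coordinate hyperplanes.**
For `p ∈ (1,∞)` and `x` with all coordinates nonzero, the map `y ↦ ‖y‖_p` is twice continuously
differentiable in a neighborhood of `x`, its Hessian at `x` is the matrix
`H = (p-1)(Σⱼ|xⱼ|^p)^{1/p-2}[(Σⱼ|xⱼ|^p)·diag(|xᵢ|^{p-2}) - v vᵀ]` with
`vᵢ = sign(xᵢ)|xᵢ|^{p-1}`; moreover `H` is positive semidefinite, `yᵀHy = 0` iff `y` is a
scalar multiple of `x`, and `H` has rank `n-1` when `n ≥ 2`. -/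
theorem pnorm_hessian
    (n : ℕ) (hn : 1 ≤ n) (p : ℝ) (hp1 : 1 < p)
    (x : Fin n → ℝ) (hx : ∀ i, x i ≠ 0)
    (f : (Fin n → ℝ) → ℝ) (hf : ∀ y, f y = (∑ j, |y j| ^ p) ^ (1 / p))
    (H : Matrix (Fin n) (Fin n) ℝ)
    (hH : ∀ i j, H i j =
      (p - 1) * (∑ k, |x k| ^ p) ^ (1 / p - 2) *
        ((∑ k, |x k| ^ p) * (if i = j then |x i| ^ (p - 2) else 0) -
          (Real.sign (x i) * |x i| ^ (p - 1)) * (Real.sign (x j) * |x j| ^ (p - 1)))) :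
    (∃ U ∈ nhds x, ContDiffOn ℝ 2 f U) ∧
    (∀ y z : Fin n → ℝ, fderiv ℝ (fun w => fderiv ℝ f w) x y z = ∑ i, ∑ j, y i * H i j * z j) ∧
    H.PosSemidef ∧
    (∀ y : Fin n → ℝ, (∑ i, ∑ j, y i * H i j * y j) = 0 ↔ ∃ t : ℝ, y = t • x) ∧
    (2 ≤ n → H.rank = n - 1) := by
  have hp0 : (0 : ℝ) < p := by linarith
  haveI : Nonempty (Fin n) := ⟨⟨0, hn⟩⟩
  set i0 : Fin n := ⟨0, hn⟩ with hi0
  have habs : ∀ i, 0 < |x i| := fun i => abs_pos.2 (hx i)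
  set g : (Fin n → ℝ) → ℝ := fun w => ∑ j, |w j| ^ p with hgdef
  set U : Set (Fin n → ℝ) := {w | ∀ i, w i ≠ 0} with hUdef
  have hU : IsOpen U := by
    have : U = ⋂ i, (fun w : Fin n → ℝ => w i) ⁻¹' {0}ᶜ := by
      ext w; simp [hUdef, Set.mem_iInter]
    rw [this]
    exact isOpen_iInter_of_finite fun i =>
      (isOpen_compl_singleton).preimage (continuous_apply i)
  have hxU : x ∈ U := hx
  have hgpos : ∀ w ∈ U, 0 < g w := fun w hw =>
    Finset.sum_pos (fun j _ => Real.rpow_pos_of_pos (abs_pos.2 (hw j)) p) Finset.univ_nonempty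
  -- first part : C² on U
  have part1 : ContDiffOn ℝ 2 f U := by
    intro w hw
    apply ContDiffAt.contDiffWithinAt
    have hfg : f = fun w => g w ^ (1 / p) := by funext y; rw [hf y]
    rw [hfg]
    have hg2 : ContDiffAt ℝ 2 g w := by
      apply ContDiffAt.sum
      intro j _
      have hproj : ContDiffAt ℝ 2 (fun w : Fin n → ℝ => w j) w :=
        (ContinuousLinearMap.proj j : (Fin n → ℝ) →L[ℝ] ℝ).contDiff.contDiffAt
      have habsj : ContDiffAt ℝ 2 (fun t : ℝ => |t|) (w j) := contDiffAt_abs (hw j)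
      have hrpow : ContDiffAt ℝ 2 (fun s : ℝ => s ^ p) (|w j|) :=
        Real.contDiffAt_rpow_const_of_ne (abs_ne_zero.2 (hw j))
      exact (hrpow.comp _ habsj).comp w hproj
    exact (Real.contDiffAt_rpow_const_of_ne (hgpos w hw).ne').comp w hg2
  -- derivative of g
  have hgderiv : ∀ w ∈ U, HasFDerivAt g
      (∑ j, (p * (Real.sign (w j) * |w j| ^ (p - 1))) •
        (ContinuousLinearMap.proj j : (Fin n → ℝ) →L[ℝ] ℝ)) w := by
    intro w hw
    apply HasFDerivAt.fun_sum
    intro j _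
    exact (hasDerivAt_abs_rpow' (hw j)).comp_hasFDerivAt w
      ((ContinuousLinearMap.proj j : (Fin n → ℝ) →L[ℝ] ℝ).hasFDerivAt)
  set D : (Fin n → ℝ) → ((Fin n → ℝ) →L[ℝ] ℝ) := fun w =>
    ∑ j, (g w ^ (1 / p - 1) * (Real.sign (w j) * |w j| ^ (p - 1))) •
      (ContinuousLinearMap.proj j : (Fin n → ℝ) →L[ℝ] ℝ) with hDdef
  have hfderiv : ∀ w ∈ U, HasFDerivAt f (D w) w := by
    intro w hw
    have hfg : f = fun w => g w ^ (1 / p) := by funext y; rw [hf y]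
    have h2 : HasDerivAt (fun s : ℝ => s ^ (1 / p)) ((1 / p) * g w ^ (1 / p - 1)) (g w) :=
      Real.hasDerivAt_rpow_const (Or.inl (hgpos w hw).ne')
    have h3 := h2.comp_hasFDerivAt w (hgderiv w hw)
    rw [hfg]
    refine h3.congr_fderiv ?_
    rw [hDdef]
    ext z
    simp only [ContinuousLinearMap.sum_apply, ContinuousLinearMap.smul_apply,
      ContinuousLinearMap.proj_apply, ContinuousLinearMap.coe_sum',
      Finset.sum_apply, smul_eq_mul, Finset.smul_sum]
    apply Finset.sum_congr rfl
    intro j _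
    field_simp
  have hfd_eq : (fun w => fderiv ℝ f w) =ᶠ[nhds x] D := by
    filter_upwards [hU.mem_nhds hxU] with w hw using (hfderiv w hw).fderiv
  -- second derivative of f at x = derivative of D at x
  set A' : (Fin n → ℝ) →L[ℝ] ℝ :=
    ((1 / p - 1) * g x ^ (1 / p - 2)) •
      (∑ i, (p * (Real.sign (x i) * |x i| ^ (p - 1))) •
        (ContinuousLinearMap.proj i : (Fin n → ℝ) →L[ℝ] ℝ)) with hA'def
  have hA : HasFDerivAt (fun w => g w ^ (1 / p - 1)) A' x := by
    have h2 : HasDerivAt (fun s : ℝ => s ^ (1 / p - 1))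
        ((1 / p - 1) * g x ^ (1 / p - 2)) (g x) := by
      have := Real.hasDerivAt_rpow_const (p := 1 / p - 1) (Or.inl (hgpos x hxU).ne')
      convert this using 2
      ring
    exact h2.comp_hasFDerivAt x (hgderiv x hxU)
  set Ψ : Fin n → ((Fin n → ℝ) →L[ℝ] ℝ) := fun j =>
    g x ^ (1 / p - 1) • (((p - 1) * |x j| ^ (p - 2)) •
        (ContinuousLinearMap.proj j : (Fin n → ℝ) →L[ℝ] ℝ)) +
      (Real.sign (x j) * |x j| ^ (p - 1)) • A' with hΨdef
  have hψ : ∀ j, HasFDerivAt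
      (fun w => g w ^ (1 / p - 1) * (Real.sign (w j) * |w j| ^ (p - 1))) (Ψ j) x := by
    intro j
    have hη : HasFDerivAt (fun w : Fin n → ℝ => Real.sign (w j) * |w j| ^ (p - 1))
        (((p - 1) * |x j| ^ (p - 2)) •
          (ContinuousLinearMap.proj j : (Fin n → ℝ) →L[ℝ] ℝ)) x := by
      have h1 : HasDerivAt (fun u : ℝ => Real.sign u * |u| ^ (p - 1))
          ((p - 1) * |x j| ^ (p - 2)) (x j) := by
        have := hasDerivAt_sign_mul_rpow (q := p - 1) (hx j)
        convert this using 2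
        ring
      exact h1.comp_hasFDerivAt x
        ((ContinuousLinearMap.proj j : (Fin n → ℝ) →L[ℝ] ℝ).hasFDerivAt)
    exact hA.mul hη
  have hDderiv : HasFDerivAt D (∑ j, (Ψ j).smulRight
      (ContinuousLinearMap.proj j : (Fin n → ℝ) →L[ℝ] ℝ)) x := by
    apply HasFDerivAt.fun_sum
    intro j _
    exact (hψ j).smul_const (ContinuousLinearMap.proj j : (Fin n → ℝ) →L[ℝ] ℝ)
  have key1 : fderiv ℝ (fun w => fderiv ℝ f w) x = ∑ j, (Ψ j).smulRight
      (ContinuousLinearMap.proj j : (Fin n → ℝ) →L[ℝ] ℝ) := by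
    rw [hfd_eq.fderiv_eq]; exact hDderiv.fderiv
  have hg0pos : (0 : ℝ) < ∑ k, |x k| ^ p := hgpos x hxU
  have hg1 : (∑ k, |x k| ^ p) ^ (1 / p - 1) = (∑ k, |x k| ^ p) ^ (1 / p - 2) * (∑ k, |x k| ^ p) := by
    rw [show (1 / p - 1) = (1 / p - 2) + 1 by ring, Real.rpow_add hg0pos, Real.rpow_one]
  -- column sums of H
  have hHcol : ∀ (j : Fin n) (y : Fin n → ℝ), (∑ i, y i * H i j) =
      (p - 1) * (∑ k, |x k| ^ p) ^ (1 / p - 2) *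
        ((∑ k, |x k| ^ p) * (|x j| ^ (p - 2) * y j) -
          (∑ i, (Real.sign (x i) * |x i| ^ (p - 1)) * y i) *
            (Real.sign (x j) * |x j| ^ (p - 1))) := by
    intro j y
    have hterm : ∀ i, y i * H i j =
        (if i = j then (p - 1) * (∑ k, |x k| ^ p) ^ (1 / p - 2) *
            ((∑ k, |x k| ^ p) * (|x i| ^ (p - 2) * y i)) else 0) -
          (p - 1) * (∑ k, |x k| ^ p) ^ (1 / p - 2) *
            (((Real.sign (x i) * |x i| ^ (p - 1)) * y i) *
              (Real.sign (x j) * |x j| ^ (p - 1))) := by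
      intro i
      rw [hH i j]
      split_ifs with h
      · subst h; ring
      · ring
    simp_rw [hterm, Finset.sum_sub_distrib, Finset.sum_ite_eq' Finset.univ j, Finset.mem_univ,
      if_true, ← Finset.mul_sum, ← Finset.sum_mul]
    ring
  have part2 : ∀ y z : Fin n → ℝ,
      fderiv ℝ (fun w => fderiv ℝ f w) x y z = ∑ i, ∑ j, y i * H i j * z j := by
    intro y z
    rw [key1]
    rw [Finset.sum_comm]
    simp only [ContinuousLinearMap.coe_sum', Finset.sum_apply,
      ContinuousLinearMap.smulRight_apply, ContinuousLinearMap.smul_apply,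
      ContinuousLinearMap.proj_apply, smul_eq_mul]
    apply Finset.sum_congr rfl
    intro j _
    rw [← Finset.sum_mul, hHcol j y]
    have hΨval : Ψ j y = (∑ k, |x k| ^ p) ^ (1 / p - 1) * ((p - 1) * |x j| ^ (p - 2) * y j) +
        (Real.sign (x j) * |x j| ^ (p - 1)) *
          ((1 / p - 1) * (∑ k, |x k| ^ p) ^ (1 / p - 2) *
            (∑ i, (p * (Real.sign (x i) * |x i| ^ (p - 1))) * y i)) := by
      rw [hΨdef, hA'def]
      simp only [ContinuousLinearMap.add_apply, ContinuousLinearMap.smul_apply,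
        ContinuousLinearMap.proj_apply, ContinuousLinearMap.coe_sum', Finset.sum_apply,
        smul_eq_mul]
      try rw [Finset.mul_sum]
      try ring_nf
    rw [hΨval]
    have hsum_p : (∑ i, (p * (Real.sign (x i) * |x i| ^ (p - 1))) * y i)
        = p * ∑ i, (Real.sign (x i) * |x i| ^ (p - 1)) * y i := by
      rw [Finset.mul_sum]; apply Finset.sum_congr rfl; intro i _; ring
    rw [hsum_p, hg1]
    field_simp
    ring
  -- the quadratic form
  have hsq : ∀ i, Real.sign (x i) * Real.sign (x i) = 1 := fun i => sign_sq (hx i)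
  have hsplit : ∀ i, |x i| ^ (p / 2) = |x i| ^ (p / 2 - 1) * |x i| := by
    intro i
    rw [← Real.rpow_add_one (habs i).ne']
    ring_nf
  have hsma : ∀ i, Real.sign (x i) * |x i| = x i := fun i => sign_mul_abs' (x i)
  set a : Fin n → ℝ := fun i => |x i| ^ (p / 2) with hadef
  have hcross : ∀ (y : Fin n → ℝ) (i j : Fin n),
      a i * (Real.sign (x j) * |x j| ^ (p / 2 - 1) * y j) -
        a j * (Real.sign (x i) * |x i| ^ (p / 2 - 1) * y i) =
      (|x i| ^ (p / 2 - 1) * |x j| ^ (p / 2 - 1) * Real.sign (x i) * Real.sign (x j)) *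
        (x i * y j - x j * y i) := by
    intro y i j
    calc a i * (Real.sign (x j) * |x j| ^ (p / 2 - 1) * y j) -
          a j * (Real.sign (x i) * |x i| ^ (p / 2 - 1) * y i)
        = (|x i| ^ (p / 2 - 1) * |x i|) * (Real.sign (x j) * |x j| ^ (p / 2 - 1) * y j) -
            (|x j| ^ (p / 2 - 1) * |x j|) * (Real.sign (x i) * |x i| ^ (p / 2 - 1) * y i) := by
          rw [hadef]; simp only; rw [hsplit i, hsplit j]
      _ = (|x i| ^ (p / 2 - 1) * |x j| ^ (p / 2 - 1) * Real.sign (x i) * Real.sign (x j)) *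
            ((Real.sign (x i) * |x i|) * y j - (Real.sign (x j) * |x j|) * y i) := by
          linear_combination
            (-(|x i| ^ (p / 2 - 1) * |x j| ^ (p / 2 - 1) * |x i| * y j * Real.sign (x j))) * hsq i
            + (|x i| ^ (p / 2 - 1) * |x j| ^ (p / 2 - 1) * |x j| * y i * Real.sign (x i)) * hsq j
      _ = _ := by rw [hsma i, hsma j]
  set b : (Fin n → ℝ) → Fin n → ℝ :=
    fun y i => Real.sign (x i) * |x i| ^ (p / 2 - 1) * y i with hbdef
  have hAA : ∀ i, |x i| ^ (p / 2 - 1) * |x i| ^ (p / 2 - 1) = |x i| ^ (p - 2) := by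
    intro i; rw [← Real.rpow_add (habs i)]; congr 1; ring
  have hA2 : ∑ i, a i ^ 2 = ∑ k, |x k| ^ p := by
    apply Finset.sum_congr rfl; intro i _
    rw [hadef]; simp only
    rw [sq, ← Real.rpow_add (habs i)]; congr 1; ring
  have hB2 : ∀ y : Fin n → ℝ, ∑ i, (b y i) ^ 2 = ∑ i, |x i| ^ (p - 2) * (y i * y i) := by
    intro y
    apply Finset.sum_congr rfl; intro i _
    rw [hbdef]; simp only
    rw [sq]
    linear_combination (|x i| ^ (p / 2 - 1) * |x i| ^ (p / 2 - 1) * y i * y i) * hsq i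
      + (y i * y i) * hAA i
  have hAB : ∀ y : Fin n → ℝ, ∑ i, a i * b y i
      = ∑ i, (Real.sign (x i) * |x i| ^ (p - 1)) * y i := by
    intro y
    apply Finset.sum_congr rfl; intro i _
    rw [hadef, hbdef]; simp only
    have h1 : |x i| ^ (p / 2) * |x i| ^ (p / 2 - 1) = |x i| ^ (p - 1) := by
      rw [← Real.rpow_add (habs i)]; congr 1; ring
    linear_combination (Real.sign (x i) * y i) * h1
  have hQform : ∀ y : Fin n → ℝ, (∑ i, ∑ j, y i * H i j * y j) =
      ((p - 1) * (∑ k, |x k| ^ p) ^ (1 / p - 2)) *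
        ((∑ i, ∑ j, (a i * b y j - a j * b y i) ^ 2) / 2) := by
    intro y
    have hswap : (∑ i, ∑ j, y i * H i j * y j) = ∑ j, (∑ i, y i * H i j) * y j := by
      rw [Finset.sum_comm]
      apply Finset.sum_congr rfl; intro j _
      rw [Finset.sum_mul]
    rw [hswap]
    simp_rw [hHcol]
    rw [← lagrange_identity a (b y), hA2, hB2 y, hAB y]
    have hterm2 : ∀ j, ((p - 1) * (∑ k, |x k| ^ p) ^ (1 / p - 2) *
          ((∑ k, |x k| ^ p) * (|x j| ^ (p - 2) * y j) -
            (∑ i, (Real.sign (x i) * |x i| ^ (p - 1)) * y i) *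
              (Real.sign (x j) * |x j| ^ (p - 1)))) * y j
        = ((p - 1) * (∑ k, |x k| ^ p) ^ (1 / p - 2)) *
            ((∑ k, |x k| ^ p) * (|x j| ^ (p - 2) * (y j * y j)))
          - ((p - 1) * (∑ k, |x k| ^ p) ^ (1 / p - 2) *
              (∑ i, (Real.sign (x i) * |x i| ^ (p - 1)) * y i)) *
            ((Real.sign (x j) * |x j| ^ (p - 1)) * y j) := by
      intro j; ring
    simp_rw [hterm2, Finset.sum_sub_distrib, ← Finset.mul_sum]
    rw [sq]
    ring
  have hc : 0 < (p - 1) * (∑ k, |x k| ^ p) ^ (1 / p - 2) :=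
    mul_pos (by linarith) (Real.rpow_pos_of_pos hg0pos _)
  have part4 : ∀ y : Fin n → ℝ,
      (∑ i, ∑ j, y i * H i j * y j) = 0 ↔ ∃ t : ℝ, y = t • x := by
    intro y
    rw [hQform y]
    constructor
    · intro h
      have hsumzero : (∑ i, ∑ j, (a i * b y j - a j * b y i) ^ 2) = 0 := by
        rcases mul_eq_zero.1 h with h' | h'
        · exact absurd h' hc.ne'
        · rcases div_eq_zero_iff.1 h' with h'' | h''
          · exact h''
          · norm_num at h''
      have hzero : ∀ i j : Fin n, a i * b y j - a j * b y i = 0 := by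
        intro i j
        have h1 := (Finset.sum_eq_zero_iff_of_nonneg (fun i _ =>
          Finset.sum_nonneg fun j _ => sq_nonneg _)).1 hsumzero i (Finset.mem_univ i)
        have h2 := (Finset.sum_eq_zero_iff_of_nonneg (fun j _ => sq_nonneg _)).1 h1 j
          (Finset.mem_univ j)
        exact pow_eq_zero_iff two_ne_zero |>.1 h2
      refine ⟨y i0 / x i0, funext fun j => ?_⟩
      have hz := hzero i0 j
      rw [hcross y i0 j] at hz
      have hpref : (|x i0| ^ (p / 2 - 1) * |x j| ^ (p / 2 - 1) * Real.sign (x i0) *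
          Real.sign (x j)) ≠ 0 := by
        refine mul_ne_zero (mul_ne_zero (mul_ne_zero ?_ ?_) ?_) ?_
        · exact (Real.rpow_pos_of_pos (habs i0) _).ne'
        · exact (Real.rpow_pos_of_pos (habs j) _).ne'
        · exact fun h => hx i0 (Real.sign_eq_zero_iff.1 h)
        · exact fun h => hx j (Real.sign_eq_zero_iff.1 h)
      have h2 : x i0 * y j - x j * y i0 = 0 := by
        rcases mul_eq_zero.1 hz with h' | h'
        · exact absurd h' hpref
        · exact h'
      show y j = (y i0 / x i0) * x j
      rw [div_mul_eq_mul_div, eq_div_iff (hx i0)]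
      linear_combination h2
    · rintro ⟨t, rfl⟩
      have hz : ∀ i j : Fin n, a i * b (t • x) j - a j * b (t • x) i = 0 := by
        intro i j
        rw [hcross]
        have : x i * (t • x) j - x j * (t • x) i = 0 := by
          simp only [Pi.smul_apply, smul_eq_mul]; ring
        rw [this, mul_zero]
      have hsum0 : (∑ i, ∑ j, (a i * b (t • x) j - a j * b (t • x) i) ^ 2) = 0 :=
        Finset.sum_eq_zero fun i _ => Finset.sum_eq_zero fun j _ => by rw [hz i j]; simp
      rw [hsum0]
      simp
  -- positive semidefiniteness
  have hsym : H.IsHermitian := by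
    show H.conjTranspose = H
    ext i j
    rw [Matrix.conjTranspose_apply, star_trivial, hH, hH]
    rcases eq_or_ne i j with rfl | hne
    · ring
    · rw [if_neg hne, if_neg (Ne.symm hne)]
      ring
  have hdot : ∀ y z : Fin n → ℝ, dotProduct y (H.mulVec z)
      = ∑ i, ∑ j, y i * H i j * z j := by
    intro y z
    simp [dotProduct, Matrix.mulVec, Finset.mul_sum, mul_assoc]
  have hpsd : H.PosSemidef := by
    refine Matrix.posSemidef_iff_dotProduct_mulVec.2 ⟨hsym, fun y => ?_⟩
    have hstar : star y = y := rfl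
    rw [hstar]
    show (0 : ℝ) ≤ dotProduct y (H.mulVec y)
    rw [hdot, hQform]
    apply mul_nonneg hc.le
    apply div_nonneg _ (by norm_num)
    exact Finset.sum_nonneg fun i _ => Finset.sum_nonneg fun j _ => sq_nonneg _
  -- rank
  have part5 : 2 ≤ n → H.rank = n - 1 := by
    intro _
    have hx0 : x ≠ 0 := fun h => hx i0 (by rw [h]; rfl)
    have hHx : H.mulVec x = 0 := by
      apply (hpsd.dotProduct_mulVec_zero_iff x).1
      have hstar : star x = x := rfl
      rw [hstar]
      show dotProduct x (H.mulVec x) = 0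
      rw [hdot]
      exact (part4 x).2 ⟨1, (one_smul ℝ x).symm⟩
    have hker : LinearMap.ker H.mulVecLin = Submodule.span ℝ {x} := by
      apply le_antisymm
      · intro y hy
        rw [LinearMap.mem_ker, Matrix.mulVecLin_apply] at hy
        have hQ0 : (∑ i, ∑ j, y i * H i j * y j) = 0 := by
          rw [← hdot, hy, dotProduct_zero]
        obtain ⟨t, rfl⟩ := (part4 y).1 hQ0
        exact Submodule.smul_mem _ t (Submodule.mem_span_singleton_self x)
      · rw [Submodule.span_le, Set.singleton_subset_iff]
        exact LinearMap.mem_ker.2 (by rw [Matrix.mulVecLin_apply]; exact hHx)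
    have hrank := LinearMap.finrank_range_add_finrank_ker H.mulVecLin
    rw [hker, finrank_span_singleton hx0] at hrank
    have hfin : Module.finrank ℝ (Fin n → ℝ) = n := by
      simp [Module.finrank_fintype_fun_eq_card]
    rw [hfin] at hrank
    show Module.finrank ℝ (LinearMap.range H.mulVecLin) = n - 1
    omega
  exact ⟨⟨U, hU.mem_nhds hxU, part1⟩, part2, hpsd, part4, part5⟩
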